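/- Let X be a real Banach space that is isomorphic to a Hilbert space, i.e., there exist a real Hilbert space H and a continuous linear equivalence X ≃ H. Then X admits a Hilbert-Schauder frame {(x_n, f_n)}_{n∈ℕ} with Hilbert-Schauder frame operator S such that, with Y the norm-closed linear span of {S x_n : n ∈ ℕ} in X*, there is a bounded linear operator T : Y → Y* for which {(S x_n, T(S x_n))}_{n∈ℕ} is a Schauder frame of Y (i.e., for every f ∈ Y the partial sums Σ_{n≤N} (T(S x_n))(f) · S x_n converge to f in norm). -/

import Mathlib

open Filter Topology

/-- A Schauder frame of a real Banach space `X`: for every `v ∈ X`, the partial sums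
`∑_{j < N} f j (v) • x j` converge to `v` in norm. -/
def SchauderFrame {X : Type*} [NormedAddCommGroup X] [NormedSpace ℝ X]
    (x : ℕ → X) (f : ℕ → X →L[ℝ] ℝ) : Prop :=
  ∀ v : X, Tendsto (fun N => ∑ j ∈ Finset.range N, f j v • x j) atTop (𝓝 v)

/-- The norm-closed linear span in `X*` of the range of a sequence of functionals. -/
noncomputable def closedSpan {X : Type*} [NormedAddCommGroup X] [NormedSpace ℝ X]
    (F : ℕ → X →L[ℝ] ℝ) : Submodule ℝ (X →L[ℝ] ℝ) :=
  (Submodule.span ℝ (Set.range F)).topologicalClosure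

noncomputable instance closedSpan_addCommGroup {X : Type*} [NormedAddCommGroup X] [NormedSpace ℝ X]
    (F : ℕ → X →L[ℝ] ℝ) : AddCommGroup (closedSpan F) :=
  Submodule.addCommGroup _

instance closedSpan_isTopologicalAddGroup {X : Type*} [NormedAddCommGroup X] [NormedSpace ℝ X]
    (F : ℕ → X →L[ℝ] ℝ) : IsTopologicalAddGroup (closedSpan F) :=
  Submodule.topologicalAddGroup _

section Aux
open RealInnerProductSpace
set_option linter.unusedSectionVars false
variable {H : Type*} [NormedAddCommGroup H] [InnerProductSpace ℝ H] [CompleteSpace H]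
variable {Z : Type*} [NormedAddCommGroup Z] [NormedSpace ℝ Z]

noncomputable def bilOp (ε : Z ≃L[ℝ] H) : Z →L[ℝ] Z →L[ℝ] ℝ :=
  ((ContinuousLinearMap.compL ℝ Z H ℝ).flip ε.toContinuousLinearMap).comp
    ((innerSL ℝ).comp ε.toContinuousLinearMap)

lemma bilOp_apply (ε : Z ≃L[ℝ] H) (v w : Z) : bilOp ε v w = ⟪ε v, ε w⟫ := rfl

noncomputable def seqOf (ε : Z ≃L[ℝ] H) {ι : Type*} [Encodable ι] (b : ι → H) : ℕ → Z :=
  fun n => (Encodable.decode₂ ι n).elim 0 (fun i => ε.symm (b i))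

lemma seqOf_encode (ε : Z ≃L[ℝ] H) {ι : Type*} [Encodable ι] (b : ι → H) (i : ι) :
    seqOf ε b (Encodable.encode i) = ε.symm (b i) := by
  simp [seqOf, Encodable.decode₂_encode]

lemma key {ι : Type*} [Encodable ι] (ε : Z ≃L[ℝ] H) (b : HilbertBasis ι ℝ H) (v : Z) :
    Tendsto (fun N => ∑ n ∈ Finset.range N,
      bilOp ε (seqOf ε ⇑b n) v • seqOf ε ⇑b n) atTop (𝓝 v) := by
  have hsum : HasSum (fun i => ⟪b i, ε v⟫ • ε.symm (b i)) v := by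
    have h1 := (b.hasSum_repr (ε v)).mapL (ε.symm : H →L[ℝ] Z)
    have h2 : HasSum (fun i => (b.repr (ε v) i : ℝ) • ε.symm (b i)) v := by
      simpa [map_smul] using h1
    have h3 : (fun i => ⟪b i, ε v⟫ • ε.symm (b i))
        = fun i => (b.repr (ε v) i : ℝ) • ε.symm (b i) := by
      funext i; rw [b.repr_apply_apply]
    rw [h3]; exact h2
  set t' : ℕ → Z := fun n =>
    (Encodable.decode₂ ι n).elim 0 (fun i => ⟪b i, ε v⟫ • ε.symm (b i)) with ht'
  have hsum' : HasSum t' v := by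
    refine (Function.Injective.hasSum_iff (Encodable.encode_injective (α := ι))
      (fun n hn => ?_)).mp ?_
    · simp only [ht']
      cases h : Encodable.decode₂ ι n with
      | none => simp
      | some i => exact absurd ⟨i, Encodable.mem_decode₂.mp h⟩ hn
    · have : t' ∘ Encodable.encode = fun i => ⟪b i, ε v⟫ • ε.symm (b i) := by
        funext i; simp [ht', Encodable.decode₂_encode]
      rw [this]; exact hsum
  have hterm : ∀ n, bilOp ε (seqOf ε ⇑b n) v • seqOf ε ⇑b n = t' n := by
    intro n
    simp only [ht', seqOf]
    cases h : Encodable.decode₂ ι n with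
    | none => simp
    | some i => simp [bilOp_apply, real_inner_comm]
  simpa only [hterm] using hsum'.tendsto_sum_nat

lemma orthonormal_countable [TopologicalSpace.SeparableSpace H] {w : Set H}
    (hw : Orthonormal ℝ ((↑) : w → H)) : Countable w := by
  refine Pairwise.countable_of_isOpen_disjoint
    (s := fun i : w => Metric.ball (i : H) (1/2)) ?_ (fun i => Metric.isOpen_ball)
    (fun i => ⟨i, by simp⟩)
  intro i j hij
  refine Metric.ball_disjoint_ball ?_
  have h1 : ‖(i : H) - (j : H)‖ ^ 2 = 2 := by
    rw [norm_sub_sq_real, hw.1 i, hw.1 j, hw.2 hij]; norm_num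
  have h2 : (0:ℝ) ≤ ‖(i : H) - (j : H)‖ := norm_nonneg _
  have : (1:ℝ) ≤ ‖(i : H) - (j : H)‖ := by nlinarith
  rw [dist_eq_norm]; linarith

end Aux

set_option maxHeartbeats 1000000 in
set_option synthInstance.maxHeartbeats 400000 in
/-- If a (separable) real Banach space `X` is isomorphic to a real Hilbert space `H`
(via a continuous linear equivalence), then `X` admits a Hilbert-Schauder frame
`{(xₙ, fₙ)}` with HSf-operator `S` such that, with `Y` the norm-closed linear span of
`{S xₙ}` in `X*`, there is a bounded operator `T : Y → Y*` making `{(S xₙ, T(S xₙ))}`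
a Schauder frame of `Y`. -/
theorem isomorphic_hilbert_has_hsf_with_dual_frame
    {X : Type*} [NormedAddCommGroup X] [NormedSpace ℝ X] [CompleteSpace X]
    [TopologicalSpace.SeparableSpace X]
    (H : Type*) [NormedAddCommGroup H] [InnerProductSpace ℝ H] [CompleteSpace H]
    (e : X ≃L[ℝ] H) :
    ∃ (x : ℕ → X) (f : ℕ → X →L[ℝ] ℝ) (S : X →L[ℝ] X →L[ℝ] ℝ),
      SchauderFrame x f ∧ (∀ n, S (x n) = f n) ∧
      ∃ (T : (closedSpan fun n => S (x n)) →L[ℝ]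
            ((closedSpan fun n => S (x n)) →L[ℝ] ℝ))
        (g : ℕ → (closedSpan fun n => S (x n))),
        (∀ n, (g n : X →L[ℝ] ℝ) = S (x n)) ∧
        ∀ h : (closedSpan fun n => S (x n)),
          Tendsto (fun N => ∑ n ∈ Finset.range N, T (g n) h • g n) atTop (𝓝 h) := by
  haveI : TopologicalSpace.SeparableSpace H :=
    e.surjective.denseRange.separableSpace e.continuous
  obtain ⟨w, b, hb⟩ := exists_hilbertBasis ℝ H
  haveI : Countable w := orthonormal_countable (hb ▸ b.orthonormal)
  haveI : Encodable w := Encodable.ofCountable w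
  set x : ℕ → X := seqOf e ⇑b with hx
  set S : X →L[ℝ] X →L[ℝ] ℝ := bilOp e with hS
  -- S is bijective
  have hker : LinearMap.ker (S : X →ₗ[ℝ] X →L[ℝ] ℝ) = ⊥ := by
    rw [LinearMap.ker_eq_bot']
    intro v hv
    have : S v v = 0 := by rw [show S v = 0 from hv]; rfl
    rw [bilOp_apply, real_inner_self_eq_norm_sq] at this
    have : ‖e v‖ = 0 := by nlinarith [norm_nonneg (e v)]
    have : e v = 0 := norm_eq_zero.mp this
    simpa using congrArg e.symm this
  have hrange : LinearMap.range (S : X →ₗ[ℝ] X →L[ℝ] ℝ) = ⊤ := by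
    rw [LinearMap.range_eq_top]
    intro φ
    obtain ⟨u, hu⟩ := (InnerProductSpace.toDual ℝ H).surjective
      (φ.comp (e.symm : H →L[ℝ] X))
    refine ⟨e.symm u, ?_⟩
    ext v
    have := congrArg (fun ψ => ψ (e v)) hu
    simp only [InnerProductSpace.toDual_apply_apply, ContinuousLinearMap.comp_apply] at this
    simpa [bilOp_apply, hS] using this
  set Ψ : X ≃L[ℝ] (X →L[ℝ] ℝ) := ContinuousLinearEquiv.ofBijective S hker hrange with hΨ
  have hΨapp : ∀ v, Ψ v = S v := fun v => rfl
  refine ⟨x, fun n => S (x n), S, fun v => key e b v, fun n => rfl, ?_⟩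
  -- the closed span is everything
  have hYtop : closedSpan (fun n => S (x n)) = ⊤ := by
    rw [closedSpan, ← Submodule.dense_iff_topologicalClosure_eq_top]
    have hq : DenseRange (fun u : H => Ψ (e.symm u)) :=
      (Ψ.surjective.comp e.symm.surjective).denseRange
    have hd : Dense ((fun u : H => Ψ (e.symm u)) ''
        (Submodule.span ℝ (Set.range ⇑b) : Set H)) :=
      hq.dense_image (Ψ.continuous.comp e.symm.continuous) (Submodule.dense_iff_topologicalClosure_eq_top.mpr b.dense_span)
    refine hd.mono ?_
    rintro - ⟨u, hu, rfl⟩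
    have : Ψ (e.symm u) ∈ (Submodule.span ℝ (Set.range ⇑b)).map
        ((Ψ : X →ₗ[ℝ] (X →L[ℝ] ℝ)).comp (e.symm : H →ₗ[ℝ] X)) :=
      Submodule.mem_map_of_mem hu
    rw [Submodule.map_span] at this
    refine Submodule.span_mono ?_ this
    rintro - ⟨-, ⟨i, rfl⟩, rfl⟩
    refine ⟨Encodable.encode i, ?_⟩
    simp only [hx, seqOf_encode, LinearMap.comp_apply]
    rfl
  haveI : CompleteSpace (closedSpan fun n => S (x n)) :=
    (Submodule.isClosed_topologicalClosure _).completeSpace_coe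
  set Y := closedSpan (fun n => S (x n)) with hY
  set ψ : Y ≃L[ℝ] (X →L[ℝ] ℝ) := ContinuousLinearEquiv.ofBijective (E := ↥Y) (F := X →L[ℝ] ℝ) (σ := RingHom.id ℝ) Y.subtypeL
    (Submodule.ker_subtypeL Y) (by rw [Submodule.range_subtypeL]; exact hYtop) with hψ
  have hψapp : ∀ y : Y, ψ y = (y : X →L[ℝ] ℝ) := fun y => rfl
  set Φ : H ≃L[ℝ] (X →L[ℝ] ℝ) := e.symm.trans Ψ with hΦ
  set εY : Y ≃L[ℝ] H := ψ.trans Φ.symm with hεY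
  refine ⟨bilOp (Z := ↥Y) (H := H) εY, seqOf εY ⇑b, ?_, fun h => by convert key εY b h using 2⟩
  intro n
  simp only [seqOf, hx]
  cases h : Encodable.decode₂ w n with
  | none => simp
  | some i =>
    simp only [Option.elim]
    have h1 : εY.symm (b i) = ψ.symm (Φ (b i)) := rfl
    rw [h1, ← hψapp, ψ.apply_symm_apply]
    rfl
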